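/- (Obata) On a Riemannian manifold with a quaternionic Hermitian triple (I, J, K) of anti-commuting orthogonal almost complex structures with K = IJ, and any metric connection ∇, the connection D = ∇ + (1/4)(A_I + A_J + A_K), where A_E = (∇E)E, is a metric connection satisfying DI = DJ = DK = 0. -/
import Mathlib


open LinearMap

/-- (Obata, pointwise algebraic form) Let `(I, J, K)` be a quaternionic Hermitian triple
of anti-commuting orthogonal (skew-adjoint) almost complex structures with `K = IJ` on a
Riemannian manifold, and `∇` a metric connection.  The covariant derivatives
`dI = ∇_X I`, `dJ = ∇_X J`, `dK = ∇_X K` (in any direction `X`) are skew-adjoint and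
satisfy the Leibniz constraints coming from the quaternionic relations.  Then the
connection `D = ∇ + ¼(A_I + A_J + A_K)`, with `A_E = (∇E)E`, is a metric connection
(its difference `Γ` with `∇` is skew-adjoint) for which `DI = DJ = DK = 0`, i.e.
`dE + [Γ, E] = 0` for `E = I, J, K`. -/
theorem stmt3 {V : Type*} [NormedAddCommGroup V] [InnerProductSpace ℝ V]
    [FiniteDimensional ℝ V]
    (I J K dI dJ dK : Module.End ℝ V)
    (hIskew : adjoint I = -I) (hJskew : adjoint J = -J) (hKskew : adjoint K = -K)
    (hI2 : I * I = -1) (hJ2 : J * J = -1) (hK2 : K * K = -1)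
    (hIJ : I * J = K) (hJI : J * I = -K)
    -- the covariant derivatives of `I, J, K` by a metric connection are skew-adjoint
    (hdIskew : adjoint dI = -dI) (hdJskew : adjoint dJ = -dJ) (hdKskew : adjoint dK = -dK)
    -- Leibniz rule applied to `I² = J² = K² = -1` :
    (hdI2 : dI * I + I * dI = 0) (hdJ2 : dJ * J + J * dJ = 0) (hdK2 : dK * K + K * dK = 0)
    -- Leibniz rule applied to the quaternionic relations :
    (hdIJ : dI * J + I * dJ = dK)
    (hdJK : dJ * K + J * dK = dI)
    (hdKI : dK * I + K * dI = dJ) :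
    let Γ : Module.End ℝ V := (1 / 4 : ℝ) • (dI * I + dJ * J + dK * K)
    adjoint Γ = -Γ ∧
    dI + (Γ * I - I * Γ) = 0 ∧
    dJ + (Γ * J - J * Γ) = 0 ∧
    dK + (Γ * K - K * Γ) = 0 := by
  -- multiplication table
  have hIK : I * K = -J := by rw [← hIJ, ← mul_assoc, hI2]; noncomm_ring
  have hKI : K * I = J := by
    rw [← hIJ, mul_assoc, hJI, mul_neg, ← hIJ, ← mul_assoc, hI2]; noncomm_ring
  have hKJ : K * J = -I := by rw [← hIJ, mul_assoc, hJ2]; noncomm_ring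
  have hJK : J * K = I := by rw [← hIJ, ← mul_assoc, hJI, neg_mul, hKJ, neg_neg]
  -- derivative commutation relations
  have cI : I * dI = -(dI * I) := eq_neg_of_add_eq_zero_right hdI2
  have cJ : J * dJ = -(dJ * J) := eq_neg_of_add_eq_zero_right hdJ2
  have cK : K * dK = -(dK * K) := eq_neg_of_add_eq_zero_right hdK2
  have cIJ : I * dJ = dK - dI * J := eq_sub_of_add_eq' hdIJ
  have cJK : J * dK = dI - dJ * K := eq_sub_of_add_eq' hdJK
  have cKI : K * dI = dJ - dK * I := eq_sub_of_add_eq' hdKI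
  have cIK : I * dK = -(dI * K) - dJ := by
    have h : dK = dI * J + I * dJ := hdIJ.symm
    calc I * dK = I * (dI * J) + (I * I) * dJ := by rw [h]; noncomm_ring
      _ = -(dI * K) - dJ := by
          rw [hI2, ← mul_assoc, cI, neg_mul, mul_assoc, hIJ]; noncomm_ring
  have cJI : J * dI = -(dJ * I) - dK := by
    have h : dI = dJ * K + J * dK := hdJK.symm
    calc J * dI = J * (dJ * K) + (J * J) * dK := by rw [h]; noncomm_ring
      _ = -(dJ * I) - dK := by
          rw [hJ2, ← mul_assoc, cJ, neg_mul, mul_assoc, hJK]; noncomm_ring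
  have cKJ : K * dJ = -(dK * J) - dI := by
    have h : dJ = dK * I + K * dI := hdKI.symm
    calc K * dJ = K * (dK * I) + (K * K) * dI := by rw [h]; noncomm_ring
      _ = -(dK * J) - dI := by
          rw [hK2, ← mul_assoc, cK, neg_mul, mul_assoc, hKI]; noncomm_ring
  intro Γ
  set S : Module.End ℝ V := dI * I + dJ * J + dK * K with hS
  have hΓ : Γ = (1 / 4 : ℝ) • S := rfl
  refine ⟨?_, ?_, ?_, ?_⟩
  · -- adjoint
    have a1 : adjoint (dI * I) = -(dI * I) := by
      calc adjoint (dI * I) = adjoint (I) ∘ₗ adjoint (dI) := adjoint_comp dI I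
        _ = (-I) * (-dI) := by rw [hIskew, hdIskew]; rfl
        _ = -(dI * I) := by rw [neg_mul_neg, cI]
    have a2 : adjoint (dJ * J) = -(dJ * J) := by
      calc adjoint (dJ * J) = adjoint (J) ∘ₗ adjoint (dJ) := adjoint_comp dJ J
        _ = (-J) * (-dJ) := by rw [hJskew, hdJskew]; rfl
        _ = -(dJ * J) := by rw [neg_mul_neg, cJ]
    have a3 : adjoint (dK * K) = -(dK * K) := by
      calc adjoint (dK * K) = adjoint (K) ∘ₗ adjoint (dK) := adjoint_comp dK K
        _ = (-K) * (-dK) := by rw [hKskew, hdKskew]; rfl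
        _ = -(dK * K) := by rw [neg_mul_neg, cK]
    rw [hΓ, hS]
    rw [map_smul, map_add, map_add, a1, a2, a3]
    module
  · have key : S * I - I * S = (-4 : ℝ) • dI := by
      have h0 : S * I - I * S =
          (dI * (I * I) + dJ * (J * I) + dK * (K * I))
          - ((I * dI) * I + (I * dJ) * J + (I * dK) * K) := by rw [hS]; noncomm_ring
      rw [h0, hI2, hJI, hKI, cI, cIJ, cIK]
      have h1 : -(dI * I) * I = dI := by
        rw [neg_mul, mul_assoc, hI2]; noncomm_ring
      have h2 : (dK - dI * J) * J = dK * J + dI := by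
        rw [sub_mul, mul_assoc, hJ2]; noncomm_ring
      have h3 : (-(dI * K) - dJ) * K = dI - dJ * K := by
        rw [sub_mul, neg_mul, mul_assoc, hK2]; noncomm_ring
      rw [h1, h2, h3]
      simp only [mul_neg, mul_neg_one, mul_one]
      module
    rw [hΓ, smul_mul_assoc, mul_smul_comm, ← smul_sub, key]
    module
  · have key : S * J - J * S = (-4 : ℝ) • dJ := by
      have h0 : S * J - J * S =
          (dI * (I * J) + dJ * (J * J) + dK * (K * J))
          - ((J * dI) * I + (J * dJ) * J + (J * dK) * K) := by rw [hS]; noncomm_ring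
      rw [h0, hIJ, hJ2, hKJ, cJ, cJI, cJK]
      have h1 : -(dJ * J) * J = dJ := by
        rw [neg_mul, mul_assoc, hJ2]; noncomm_ring
      have h2 : (-(dJ * I) - dK) * I = dJ - dK * I := by
        rw [sub_mul, neg_mul, mul_assoc, hI2]; noncomm_ring
      have h3 : (dI - dJ * K) * K = dI * K + dJ := by
        rw [sub_mul, mul_assoc, hK2]; noncomm_ring
      rw [h1, h2, h3]
      simp only [mul_neg, mul_neg_one, mul_one]
      module
    rw [hΓ, smul_mul_assoc, mul_smul_comm, ← smul_sub, key]
    module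
  · have key : S * K - K * S = (-4 : ℝ) • dK := by
      have h0 : S * K - K * S =
          (dI * (I * K) + dJ * (J * K) + dK * (K * K))
          - ((K * dI) * I + (K * dJ) * J + (K * dK) * K) := by rw [hS]; noncomm_ring
      rw [h0, hIK, hJK, hK2, cK, cKI, cKJ]
      have h1 : -(dK * K) * K = dK := by
        rw [neg_mul, mul_assoc, hK2]; noncomm_ring
      have h2 : (dJ - dK * I) * I = dJ * I + dK := by
        rw [sub_mul, mul_assoc, hI2]; noncomm_ring
      have h3 : (-(dK * J) - dI) * J = dK - dI * J := by
        rw [sub_mul, neg_mul, mul_assoc, hJ2]; noncomm_ring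
      rw [h1, h2, h3]
      simp only [mul_neg, mul_neg_one, mul_one]
      module
    rw [hΓ, smul_mul_assoc, mul_smul_comm, ← smul_sub, key]
    module
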